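/- Second Ratio Test (divergence part): Let (a_n) be a sequence of positive reals. If min(liminf a_{2n}/a_n, liminf a_{2n+1}/a_n) > 1/2, then ∑ a_n diverges. -/

import Mathlib

open Filter Topology

/-- From `1/2 < liminf u` in ℝ we can extract `r > 1/2` with eventually `r ≤ u n`. -/
lemma exists_ev_of_lt_liminf (u : ℕ → ℝ)
    (h : 1 / 2 < Filter.liminf u Filter.atTop) :
    ∃ r : ℝ, 1 / 2 < r ∧ ∀ᶠ n in Filter.atTop, r ≤ u n := by
  rw [Filter.liminf_eq] at h
  set S := {a : ℝ | ∀ᶠ n in Filter.atTop, a ≤ u n} with hS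
  by_cases hne : S.Nonempty
  · by_cases hbdd : BddAbove S
    · obtain ⟨r, hrS, hr⟩ := exists_lt_of_lt_csSup hne h
      exact ⟨r, hr, hrS⟩
    · rw [Real.sSup_of_not_bddAbove hbdd] at h; norm_num at h
  · rw [Set.not_nonempty_iff_eq_empty] at hne
    rw [hne, Real.sSup_empty] at h; norm_num at h

lemma double_block_sum (a : ℕ → ℝ) (s : ℕ) :
    ∀ t : ℕ, ∑ n ∈ Finset.Ico (2 * s) (2 * t), a n
      = ∑ n ∈ Finset.Ico s t, (a (2 * n) + a (2 * n + 1)) := by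
  intro t
  induction t with
  | zero => simp
  | succ t ih =>
    rcases le_or_gt s t with hst | hst
    · have h1 : 2 * s ≤ 2 * t := by omega
      have h2 : 2 * s ≤ 2 * t + 1 := by omega
      have e1 : 2 * (t + 1) = (2 * t + 1) + 1 := by ring
      rw [Finset.sum_Ico_succ_top hst, e1, Finset.sum_Ico_succ_top h2,
        Finset.sum_Ico_succ_top h1, ih]
      ring
    · rw [Finset.Ico_eq_empty (by omega), Finset.Ico_eq_empty (by omega)]
      simp

lemma block_ge (a : ℕ → ℝ) (c : ℝ) (hc : 1 ≤ c) (N : ℕ)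
    (h : ∀ n, N ≤ n → c * a n ≤ a (2 * n) + a (2 * n + 1))
    (hnn : ∀ n, N ≤ n → 0 ≤ a n) (m : ℕ) (hm : N ≤ m) :
    ∀ k, a m ≤ ∑ n ∈ Finset.Ico (2 ^ k * m) (2 ^ k * (m + 1)), a n := by
  intro k
  induction k with
  | zero => simp
  | succ k ih =>
    refine le_trans ih ?_
    have step : ∑ n ∈ Finset.Ico (2 ^ k * m) (2 ^ k * (m + 1)), a n
        ≤ ∑ n ∈ Finset.Ico (2 ^ k * m) (2 ^ k * (m + 1)), (a (2 * n) + a (2 * n + 1)) := by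
      refine Finset.sum_le_sum ?_
      intro n hn
      rw [Finset.mem_Ico] at hn
      have hNn : N ≤ n := le_trans hm (le_trans (Nat.le_mul_of_pos_left m (pow_pos (by norm_num) k)) hn.1)
      calc a n ≤ c * a n := le_mul_of_one_le_left (hnn n hNn) hc
        _ ≤ a (2 * n) + a (2 * n + 1) := h n hNn
    refine le_trans step ?_
    rw [← double_block_sum a]
    have e1 : 2 * (2 ^ k * m) = 2 ^ (k + 1) * m := by ring
    have e2 : 2 * (2 ^ k * (m + 1)) = 2 ^ (k + 1) * (m + 1) := by ring
    rw [e1, e2]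

theorem second_ratio_test_divergence (a : ℕ → ℝ)
    (ha : ∀ n, 1 ≤ n → 0 < a n)
    (h1 : 1 / 2 < Filter.liminf (fun n => a (2 * n) / a n) Filter.atTop)
    (h2 : 1 / 2 < Filter.liminf (fun n => a (2 * n + 1) / a n) Filter.atTop) :
    ¬ Summable a := by
  obtain ⟨r1, hr1, hev1⟩ := exists_ev_of_lt_liminf _ h1
  obtain ⟨r2, hr2, hev2⟩ := exists_ev_of_lt_liminf _ h2
  obtain ⟨N1, hN1⟩ := Filter.eventually_atTop.1 hev1
  obtain ⟨N2, hN2⟩ := Filter.eventually_atTop.1 hev2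
  set r : ℝ := min r1 r2 with hrdef
  have hr : 1 / 2 < r := lt_min hr1 hr2
  set N : ℕ := max (max N1 N2) 1 with hNdef
  have key : ∀ n, N ≤ n → (2 * r) * a n ≤ a (2 * n) + a (2 * n + 1) := by
    intro n hn
    have hn1 : 1 ≤ n := le_trans (le_max_right _ _) hn
    have hpos : 0 < a n := ha n hn1
    have h1' : r ≤ a (2 * n) / a n :=
      le_trans (min_le_left _ _) (hN1 n (le_trans (le_trans (le_max_left _ _) (le_max_left _ _)) hn))
    have h2' : r ≤ a (2 * n + 1) / a n :=
      le_trans (min_le_right _ _) (hN2 n (le_trans (le_trans (le_max_right _ _) (le_max_left _ _)) hn))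
    have ha1 : r * a n ≤ a (2 * n) := (le_div_iff₀ hpos).mp h1'
    have ha2 : r * a n ≤ a (2 * n + 1) := (le_div_iff₀ hpos).mp h2'
    nlinarith
  intro hs
  have hm1 : 1 ≤ N := le_max_right _ _
  have hamp : 0 < a N := ha N hm1
  obtain ⟨s, hsv⟩ := (summable_iff_vanishing.mp hs) (Set.Iio (a N))
    (Iio_mem_nhds hamp)
  obtain ⟨M, hM⟩ := s.exists_nat_subset_range
  -- choose K with M ≤ 2^K
  have h2K : M ≤ 2 ^ M := Nat.le_of_lt (Nat.lt_two_pow_self (n := M))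
  set t : Finset ℕ := Finset.Ico (2 ^ M * N) (2 ^ M * (N + 1)) with ht
  have hdisj : Disjoint t s := by
    refine Finset.disjoint_left.mpr ?_
    intro x hx hxs
    have hxM : x < M := Finset.mem_range.mp (hM hxs)
    rw [ht, Finset.mem_Ico] at hx
    have : 2 ^ M ≤ 2 ^ M * N := Nat.le_mul_of_pos_right _ (by omega)
    omega
  have hlt : ∑ n ∈ t, a n < a N := hsv t hdisj
  have hge : a N ≤ ∑ n ∈ t, a n := by
    refine block_ge a (2 * r) (by linarith) N key ?_ N le_rfl M
    intro n hn
    exact le_of_lt (ha n (le_trans hm1 hn))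
  linarith
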